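/- Forward shift: p_n^{(α,β)}(x,y) - p_n^{(α,β)}(qx,y) = -(q^{1-n}(1-q^n)(1-αβq^{n+1})/(1-αq)) · x · p_{n-1}^{(qα,qβ)}(x,y) for n ≥ 1. -/

import Mathlib

open Finset

/-- q-shifted factorial (a;q)_n -/
noncomputable def qPoch (a q : ℝ) (n : ℕ) : ℝ := ∏ j ∈ Finset.range n, (1 - a * q ^ j)

/-- infinite q-shifted factorial (a;q)_∞ -/
noncomputable def qPochInf (a q : ℝ) : ℝ := ∏' j : ℕ, (1 - a * q ^ j)

/-- q-binomial coefficient [n choose k]_q -/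
noncomputable def qBinom (q : ℝ) (n k : ℕ) : ℝ :=
  qPoch q q n / (qPoch q q k * qPoch q q (n - k))

/-- q-derivative -/
noncomputable def Dq (q : ℝ) (f : ℝ → ℝ) (x : ℝ) : ℝ := (f x - f (q * x)) / x

/-- bivariate q-Laguerre polynomial L_n^{(α)}(x,y) -/
noncomputable def qLaguerre (q α : ℝ) (n : ℕ) (x y : ℝ) : ℝ :=
  ∑ k ∈ Finset.range (n + 1),
    (-1 : ℝ) ^ k * qBinom q n k * (q ^ ((k : ℝ) ^ 2 + (k : ℝ) * α)) /
      qPoch (q ^ (α + 1)) q k * x ^ k * y ^ (n - k)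

/-- bivariate little q-Jacobi polynomial p_n^{(α,β)}(x,y) -/
noncomputable def littleQJacobi (q a b : ℝ) (n : ℕ) (x y : ℝ) : ℝ :=
  ∑ k ∈ Finset.range (n + 1),
    (-1 : ℝ) ^ k * (q ^ (((k : ℝ) * ((k : ℝ) + 1 - 2 * (n : ℝ))) / 2)) * qBinom q n k *
      (qPoch (a * b * q ^ (n + 1)) q k / qPoch (a * q) q k) * x ^ k * y ^ (n - k)

lemma qPoch_succ' (c q : ℝ) (j : ℕ) :
    qPoch c q (j+1) = (1 - c) * qPoch (c*q) q j := by
  simp only [qPoch, Finset.prod_range_succ']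
  rw [mul_comm]
  congr 1
  · simp
  · apply Finset.prod_congr rfl; intro i _; ring_nf

lemma qPoch_q_pos {q : ℝ} (hq : 0 < q) (hq1 : q < 1) (m : ℕ) : 0 < qPoch q q m := by
  apply Finset.prod_pos
  intro i _
  have : q * q ^ i ≤ q * 1 := by
    apply mul_le_mul_of_nonneg_left _ hq.le
    exact pow_le_one₀ hq.le hq1.le
  nlinarith [pow_pos hq i]

lemma qBinom_step {q : ℝ} (hq : 0 < q) (hq1 : q < 1) (n j : ℕ) (hj : j + 1 ≤ n) :
    (1 - q ^ (j+1)) * qBinom q n (j+1) = (1 - q ^ n) * qBinom q (n-1) j := by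
  have h1 : qPoch q q n = qPoch q q (n-1) * (1 - q ^ n) := by
    conv_lhs => rw [show n = (n-1)+1 by omega]
    rw [qPoch, Finset.prod_range_succ, ← qPoch]
    rw [show q * q ^ (n-1) = q ^ n by rw [← pow_succ']; congr 1; omega]
  have h2 : qPoch q q (j+1) = qPoch q q j * (1 - q ^ (j+1)) := by
    rw [qPoch, Finset.prod_range_succ, ← qPoch, ← pow_succ']
  have h3 : n - (j+1) = (n-1) - j := by omega
  have p1 := (qPoch_q_pos hq hq1 j).ne'
  have p2 := (qPoch_q_pos hq hq1 ((n-1)-j)).ne'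
  have p3 : (1 - q^(j+1)) ≠ 0 := by
    have : q ^ (j+1) < 1 := pow_lt_one₀ hq.le hq1 (by omega)
    linarith
  rw [qBinom, qBinom, h1, h2, h3]
  field_simp

theorem littleQJacobi_forwardShift (q a b : ℝ) (hq : 0 < q) (hq1 : q < 1)
    (ha : a ≠ q⁻¹) (n : ℕ) (hn : 1 ≤ n) (x y : ℝ) :
    littleQJacobi q a b n x y - littleQJacobi q a b n (q * x) y
      = -(q / q ^ n * (1 - q ^ n) * (1 - a * b * q ^ (n + 1)) / (1 - a * q)) * x *
          littleQJacobi q (q * a) (q * b) (n - 1) x y := by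
  have hq0 : q ≠ 0 := hq.ne'
  have haq : 1 - a * q ≠ 0 := fun h => ha (eq_inv_of_mul_eq_one_left (by linarith))
  have hn1 : n - 1 + 1 = n := by omega
  rw [littleQJacobi, littleQJacobi, littleQJacobi, ← Finset.sum_sub_distrib, hn1,
    Finset.mul_sum, Finset.sum_range_succ']
  rw [show ((-1 : ℝ) ^ 0 * q ^ (((0:ℕ) : ℝ) * (((0:ℕ):ℝ) + 1 - 2 * (n : ℝ)) / 2) * qBinom q n 0 *
      (qPoch (a * b * q ^ (n + 1)) q 0 / qPoch (a * q) q 0) * x ^ 0 * y ^ (n - 0) -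
      (-1 : ℝ) ^ 0 * q ^ (((0:ℕ) : ℝ) * (((0:ℕ):ℝ) + 1 - 2 * (n : ℝ)) / 2) * qBinom q n 0 *
      (qPoch (a * b * q ^ (n + 1)) q 0 / qPoch (a * q) q 0) * (q*x) ^ 0 * y ^ (n - 0)) = 0 from by ring,
    add_zero]
  apply Finset.sum_congr rfl
  intro j hj
  simp only [Finset.mem_range] at hj
  push_cast [Nat.cast_sub hn]
  have e1 : qPoch (a * b * q ^ (n + 1)) q (j + 1)
      = (1 - a * b * q ^ (n + 1)) * qPoch (q * a * (q * b) * q ^ n) q j := by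
    rw [qPoch_succ']
    congr 2
    ring
  have e2 : qPoch (a * q) q (j + 1) = (1 - a * q) * qPoch (q * a * q) q j := by
    rw [qPoch_succ']
    congr 2
    ring
  have hr : q ^ ((↑j + 1) * (↑j + 1 + 1 - 2 * (↑n : ℝ)) / 2)
      = q / q ^ n * q ^ ((↑j : ℝ) * (↑j + 1 - 2 * ((↑n : ℝ) - 1)) / 2) := by
    rw [show q / q ^ n * q ^ ((↑j : ℝ) * (↑j + 1 - 2 * ((↑n : ℝ) - 1)) / 2)
        = q ^ ((1 : ℝ) - (n : ℝ) + (↑j : ℝ) * (↑j + 1 - 2 * ((↑n : ℝ) - 1)) / 2) from by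
      rw [Real.rpow_add hq, Real.rpow_sub hq, Real.rpow_one, Real.rpow_natCast]]
    congr 1
    ring
  have hsub : n - (j + 1) = n - 1 - j := by omega
  have hqj : (1 : ℝ) - q ^ (j + 1) ≠ 0 := by
    have : q ^ (j + 1) < 1 := pow_lt_one₀ hq.le hq1 (by omega)
    linarith
  rw [e1, e2, hr, hsub]
  rcases eq_or_ne (qPoch (q * a * q) q j) 0 with hQ | hQ
  · rw [hQ]
    simp
  · have hb' : qBinom q n (j + 1) = (1 - q ^ n) * qBinom q (n - 1) j / (1 - q ^ (j + 1)) := by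
      rw [eq_div_iff hqj]
      linear_combination qBinom_step hq hq1 n j hj
    rw [hb']
    have hqn : (q : ℝ) ^ n ≠ 0 := pow_ne_zero _ hq0
    field_simp
    ring
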